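/- arXiv:1611.09263 — 5 statements merged into one kernel-verified Lean document; each statement's English description precedes it below -/
import Mathlib

section
/- Let C and D be small categories and suppose D has an initial object. Then the precomposition functor π* : Psh(C) ⥤ Psh(C × D), given by F ↦ F ∘ πᵒᵖ where π : C × D ⥤ C is the projection, is fully faithful. -/
open CategoryTheory CategoryTheory.Limits

universe u

noncomputable def sectLFstAdj (C D : Type u) [SmallCategory C] [SmallCategory D]
    [HasInitial D] : Prod.sectL C (⊥_ D) ⊣ CategoryTheory.Prod.fst C D :=
  Adjunction.mk' {
    homEquiv := fun c x =>
      { toFun := fun f => f.1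
        invFun := fun g => ⟨g, initialIsInitial.to x.2⟩
        left_inv := fun f => by
          ext
          · rfl
          · apply initialIsInitial.hom_ext
        right_inv := fun g => rfl }
    unit := { app := fun c => 𝟙 c, naturality := by intro X Y f; change f ≫ 𝟙 Y = 𝟙 X ≫ f; simp }
    counit := { app := fun x => ⟨𝟙 x.1, initialIsInitial.to x.2⟩,
                naturality := by
                  intro x y f
                  ext
                  · change f.1 ≫ 𝟙 y.1 = 𝟙 x.1 ≫ f.1; simp
                  · apply initialIsInitial.hom_ext }
    homEquiv_unit := fun {X Y f} => (Category.id_comp f.1).symm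
    homEquiv_counit := fun {X Y g} => by
      ext
      · exact (Category.comp_id g).symm
      · apply initialIsInitial.hom_ext }

instance sectLFstAdj_unit_iso (C D : Type u) [SmallCategory C] [SmallCategory D] [HasInitial D]
    (X : C) : IsIso ((sectLFstAdj C D).unit.app X) := by
  change IsIso (𝟙 X); infer_instance

noncomputable def fstOpAdj (C D : Type u) [SmallCategory C] [SmallCategory D] [HasInitial D] :
    (CategoryTheory.Prod.fst C D).op ⊣ (Prod.sectL C (⊥_ D)).op :=
  (sectLFstAdj C D).op

instance fstOpAdj_counit_app_iso (C D : Type u) [SmallCategory C] [SmallCategory D]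
    [HasInitial D] (Y : Cᵒᵖ) : IsIso ((fstOpAdj C D).counit.app Y) := by
  change IsIso (((sectLFstAdj C D).unit.app Y.unop).op)
  infer_instance

/-- Let `C` and `D` be small categories and suppose `D` has an initial
object. Then the precomposition functor `π* : Psh(C) ⥤ Psh(C × D)`, given by
`F ↦ F ∘ πᵒᵖ` where `π : C × D ⥤ C` is the projection, is fully faithful. -/
theorem precomposition_with_projection_fullyFaithful
    (C D : Type u) [SmallCategory C] [SmallCategory D] [HasInitial D] :
    ((Functor.whiskeringLeft (C × D)ᵒᵖ Cᵒᵖ (Type u)).obj (CategoryTheory.Prod.fst C D).op).Full ∧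
    ((Functor.whiskeringLeft (C × D)ᵒᵖ Cᵒᵖ (Type u)).obj (CategoryTheory.Prod.fst C D).op).Faithful := by
  have h1 : ∀ (X : Cᵒᵖ ⥤ Type u) (x : Cᵒᵖ),
      IsIso ((((fstOpAdj C D).whiskerLeft (Type u)).counit.app X).app x) := fun X x => by
    rw [Adjunction.whiskerLeft_counit_app_app]
    infer_instance
  have h2 : ∀ (X : Cᵒᵖ ⥤ Type u),
      IsIso (((fstOpAdj C D).whiskerLeft (Type u)).counit.app X) := fun X =>
    NatIso.isIso_of_isIso_app _
  have h3 : IsIso ((fstOpAdj C D).whiskerLeft (Type u)).counit :=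
    NatIso.isIso_of_isIso_app _
  have ff := ((fstOpAdj C D).whiskerLeft (Type u)).fullyFaithfulROfIsIsoCounit
  exact ⟨ff.full, ff.faithful⟩
end

section
/- Let C and D be small categories and suppose D has an initial object. Then π* : Psh(C) ⥤ Psh(C × D) is a cartesian closed functor: it preserves finite products, and for all presheaves A, B on C the canonical exponential comparison morphism π*(B^A) ⟶ (π*B)^(π*A) in Psh(C × D) is an isomorphism. -/
open CategoryTheory CategoryTheory.Limits

universe u

noncomputable section

/-- The functor `C ⥤ C × D` sending `c` to `(c, ⊥)`. -/
noncomputable def sigmaFunctor (C D : Type u) [SmallCategory C] [SmallCategory D]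
    [HasInitial D] : C ⥤ C × D :=
  (Functor.id C).prod' ((Functor.const C).obj (⊥_ D))

/-- The adjunction `πᵒᵖ ⊣ σᵒᵖ` between opposite presheaf index categories. -/
noncomputable def piOpAdj (C D : Type u) [SmallCategory C] [SmallCategory D]
    [HasInitial D] : (CategoryTheory.Prod.fst C D).op ⊣ (sigmaFunctor C D).op :=
  Adjunction.mkOfHomEquiv
    { homEquiv := fun X Y =>
        { toFun := fun f => (show (sigmaFunctor C D).obj Y.unop ⟶ X.unop from
            (f.unop, initial.to X.unop.2)).op
          invFun := fun g => (g.unop.1).op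
          left_inv := fun f => rfl
          right_inv := fun g => by
            apply Quiver.Hom.unop_inj
            ext
            · rfl
            · exact initial.hom_ext _ _ }
      homEquiv_naturality_left_symm := fun f g => rfl
      homEquiv_naturality_right := fun f g => by
        apply Quiver.Hom.unop_inj
        ext
        · rfl
        · exact initial.hom_ext _ _ }

instance piOpAdj_counit_isIso (C D : Type u) [SmallCategory C] [SmallCategory D]
    [HasInitial D] : IsIso (piOpAdj C D).counit := by
  have : ∀ Y : Cᵒᵖ, IsIso ((piOpAdj C D).counit.app Y) := fun Y =>
    inferInstanceAs (IsIso (𝟙 Y))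
  exact NatIso.isIso_of_isIso_app _

/-- The adjunction whose right adjoint is `π* : Psh(C) ⥤ Psh(C × D)`. -/
noncomputable def pshAdj (C D : Type u) [SmallCategory C] [SmallCategory D] [HasInitial D] :
    (Functor.whiskeringLeft Cᵒᵖ (C × D)ᵒᵖ (Type u)).obj (sigmaFunctor C D).op ⊣
      (Functor.whiskeringLeft (C × D)ᵒᵖ Cᵒᵖ (Type u)).obj (CategoryTheory.Prod.fst C D).op :=
  Adjunction.whiskerLeft (Type u) (piOpAdj C D)

instance pshAdj_counit_isIso (C D : Type u) [SmallCategory C] [SmallCategory D]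
    [HasInitial D] : IsIso (pshAdj C D).counit := by
  have h : ∀ X : Cᵒᵖ ⥤ Type u, IsIso ((pshAdj C D).counit.app X) := fun X => by
    dsimp [pshAdj, Adjunction.whiskerLeft]
    infer_instance
  exact NatIso.isIso_of_isIso_app _

instance pshFull (C D : Type u) [SmallCategory C] [SmallCategory D] [HasInitial D] :
    ((Functor.whiskeringLeft (C × D)ᵒᵖ Cᵒᵖ (Type u)).obj (CategoryTheory.Prod.fst C D).op).Full :=
  ((pshAdj C D).fullyFaithfulROfIsIsoCounit).full

instance pshFaithful (C D : Type u) [SmallCategory C] [SmallCategory D] [HasInitial D] :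
    ((Functor.whiskeringLeft (C × D)ᵒᵖ Cᵒᵖ (Type u)).obj (CategoryTheory.Prod.fst C D).op).Faithful :=
  ((pshAdj C D).fullyFaithfulROfIsIsoCounit).faithful

/-- Let `C` and `D` be small categories and suppose `D` has an initial
object. Then `π* : Psh(C) ⥤ Psh(C × D)` is a cartesian closed functor: it preserves finite
products, and for all presheaves `A, B` on `C` the canonical exponential comparison
morphism `π*(B^A) ⟶ (π*B)^(π*A)` is an isomorphism. -/
theorem precomposition_with_projection_cartesianClosedFunctor
    (C D : Type u) [SmallCategory C] [SmallCategory D] [HasInitial D] :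
    PreservesFiniteProducts
      ((Functor.whiskeringLeft (C × D)ᵒᵖ Cᵒᵖ (Type u)).obj (CategoryTheory.Prod.fst C D).op) ∧
    ∀ A : Cᵒᵖ ⥤ Type u,
      IsIso (expComparison
        ((Functor.whiskeringLeft (C × D)ᵒᵖ Cᵒᵖ (Type u)).obj (CategoryTheory.Prod.fst C D).op) A).natTrans := by
  constructor
  · infer_instance
  · have := cartesianClosedFunctorOfLeftAdjointPreservesBinaryProducts _ (pshAdj C D)
    exact this.comparison_iso

end
end

section
/- Let D and C be small categories with C having binary products, let e be an object of C, and let X be a presheaf on D × C. Then the exponential presheaf X^(π*(y e)) in Psh(D × C) satisfies X^(π*(y e))(c, d) ≅ X(c, d × e) for all objects c of D and d of C, naturally in (c, d). -/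
open CategoryTheory CategoryTheory.Limits

universe u

namespace ExpPYAux

open MonoidalCategory Opposite

variable {D C : Type u} [SmallCategory D] [SmallCategory C] [HasBinaryProducts C] (e : C)

/-- The "multiply by `e`" shift functor `(c, d) ↦ (c, d ⨯ e)` on `D × C`. -/
noncomputable abbrev S : D × C ⥤ D × C := (𝟭 D).prod (Limits.prod.functor.flip.obj e)

/-- The precomposed Yoneda presheaf `π*(y e)` on `D × C`. -/
abbrev P (D : Type u) [SmallCategory D] : (D × C)ᵒᵖ ⥤ Type u :=
  ((Functor.whiskeringLeft (D × C)ᵒᵖ Cᵒᵖ (Type u)).obj (CategoryTheory.Prod.snd D C).op).obj (yoneda.obj e)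

noncomputable def fwd (Y X : (D × C)ᵒᵖ ⥤ Type u) (φ : P e D ⊗ Y ⟶ X) :
    Y ⟶ (S (D := D) e).op ⋙ X where
  app x := TypeCat.ofHom fun y => φ.app (op (x.unop.1, x.unop.2 ⨯ e))
    ((Limits.prod.snd : x.unop.2 ⨯ e ⟶ e),
     Y.map (Quiver.Hom.op ((𝟙 x.unop.1, (Limits.prod.fst : x.unop.2 ⨯ e ⟶ x.unop.2)) :
       (x.unop.1, x.unop.2 ⨯ e) ⟶ x.unop)) y)
  naturality x x' f := by
    refine ConcreteCategory.hom_ext _ _ fun y => ?_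
    change φ.app _ (_, Y.map _ (Y.map f y)) = X.map ((S (D := D) e).op.map f) (φ.app _ (_, Y.map _ y))
    have h := (NatTrans.naturality_apply φ ((S (D := D) e).op.map f) (x := ((Limits.prod.snd,
      Y.map (Quiver.Hom.op ((𝟙 x.unop.1, Limits.prod.fst) : (x.unop.1, x.unop.2 ⨯ e) ⟶ x.unop)) y) :
        (P e D).obj ((S (D := D) e).op.obj x) × Y.obj ((S (D := D) e).op.obj x))))
    refine Eq.trans ?_ h
    exact congrArg (φ.app _) (Prod.ext (((Limits.prod.map_snd _ _).trans (Category.comp_id _)).symm) (by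
      refine ((Functor.map_comp_apply Y _ _ _).symm).trans (Eq.trans ?_ (Functor.map_comp_apply Y _ _ _))
      exact congrArg (fun g => Y.map g y) (Quiver.Hom.unop_inj (Prod.ext
        (by change 𝟙 _ ≫ f.unop.1 = f.unop.1 ≫ 𝟙 _; simp)
        (by change Limits.prod.fst ≫ f.unop.2 = Limits.prod.map f.unop.2 (𝟙 e) ≫ Limits.prod.fst; simp)))))

noncomputable def bwd (Y X : (D × C)ᵒᵖ ⥤ Type u) (ψ : Y ⟶ (S (D := D) e).op ⋙ X) :
    P e D ⊗ Y ⟶ X where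
  app x := TypeCat.ofHom fun (p : (P e D ⊗ Y).obj x) => X.map (Quiver.Hom.op ((𝟙 x.unop.1, Limits.prod.lift (𝟙 x.unop.2) p.1) :
      x.unop ⟶ (x.unop.1, x.unop.2 ⨯ e))) (ψ.app x p.2)
  naturality x x' f := by
    refine ConcreteCategory.hom_ext _ _ fun (p : (P e D).obj x × Y.obj x) => ?_
    change X.map (Quiver.Hom.op ((𝟙 x'.unop.1, Limits.prod.lift (𝟙 x'.unop.2) (f.unop.2 ≫ p.1)) :
        x'.unop ⟶ (x'.unop.1, x'.unop.2 ⨯ e))) (ψ.app x' (Y.map f p.2)) =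
      X.map f (X.map (Quiver.Hom.op ((𝟙 x.unop.1, Limits.prod.lift (𝟙 x.unop.2) p.1) :
        x.unop ⟶ (x.unop.1, x.unop.2 ⨯ e))) (ψ.app x p.2))
    rw [NatTrans.naturality_apply ψ f]
    refine ((Functor.map_comp_apply X _ _ _).symm).trans (Eq.trans ?_ (Functor.map_comp_apply X _ _ _))
    exact congrArg (fun g => X.map g _) (Quiver.Hom.unop_inj (Prod.ext
      (by change 𝟙 _ ≫ f.unop.1 = f.unop.1 ≫ 𝟙 _; simp)
      (by
        change Limits.prod.lift (𝟙 _) (f.unop.2 ≫ p.1) ≫ Limits.prod.map f.unop.2 (𝟙 e) =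
          f.unop.2 ≫ Limits.prod.lift (𝟙 _) p.1
        ext <;> simp)))

noncomputable def homEquiv' (Y X : (D × C)ᵒᵖ ⥤ Type u) :
    ((tensorLeft (P e D)).obj Y ⟶ X) ≃
      (Y ⟶ (((Functor.whiskeringLeft (D × C)ᵒᵖ (D × C)ᵒᵖ (Type u)).obj (S (D := D) e).op).obj X)) where
  toFun := fwd e Y X
  invFun := bwd e Y X
  left_inv φ := by
    refine NatTrans.ext (funext fun x => ConcreteCategory.hom_ext _ _ fun (p : (P e D).obj x × Y.obj x) => ?_)
    change X.map (Quiver.Hom.op ((𝟙 x.unop.1, Limits.prod.lift (𝟙 x.unop.2) p.1) :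
        x.unop ⟶ (x.unop.1, x.unop.2 ⨯ e)))
      (φ.app _ (Limits.prod.snd, Y.map (Quiver.Hom.op ((𝟙 x.unop.1, Limits.prod.fst) :
        (x.unop.1, x.unop.2 ⨯ e) ⟶ x.unop)) p.2)) = φ.app x p
    refine (NatTrans.naturality_apply φ _ _).symm.trans ?_
    refine congrArg (φ.app x) (Prod.ext (by exact Limits.prod.lift_snd _ _) ?_)
    change Y.map _ (Y.map _ p.2) = p.2
    rw [← Functor.map_comp_apply]
    exact (congrArg (fun g => Y.map g p.2) (Quiver.Hom.unop_inj
      (Prod.ext (by simp) (by exact Limits.prod.lift_fst _ _)))).trans (Functor.map_id_apply Y _ p.2)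
  right_inv ψ := by
    refine NatTrans.ext (funext fun x => ConcreteCategory.hom_ext _ _ fun y => ?_)
    change X.map (Quiver.Hom.op ((𝟙 x.unop.1, Limits.prod.lift (𝟙 (x.unop.2 ⨯ e)) Limits.prod.snd) :
        (x.unop.1, x.unop.2 ⨯ e) ⟶ (x.unop.1, (x.unop.2 ⨯ e) ⨯ e)))
      (ψ.app _ (Y.map (Quiver.Hom.op ((𝟙 x.unop.1, Limits.prod.fst) :
        (x.unop.1, x.unop.2 ⨯ e) ⟶ x.unop)) y)) = ψ.app x y
    rw [NatTrans.naturality_apply ψ]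
    refine ((Functor.map_comp_apply X _ _ _).symm).trans ?_
    exact (congrArg (fun g => X.map g _) (Quiver.Hom.unop_inj
      (Prod.ext (by change (𝟙 x.unop.1 ≫ 𝟙 x.unop.1 : x.unop.1 ⟶ x.unop.1) = 𝟙 x.unop.1; simp)
        (by
          change Limits.prod.lift (𝟙 (x.unop.2 ⨯ e)) Limits.prod.snd ≫ Limits.prod.map Limits.prod.fst (𝟙 e) =
            𝟙 (x.unop.2 ⨯ e)
          ext <;> simp)))).trans (Functor.map_id_apply X _ _)

/-- The adjunction `(π*(y e) ⊗ -) ⊣ (precompose with the shift functor)`. -/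
noncomputable def adj :
    tensorLeft (P e D) ⊣ ((Functor.whiskeringLeft (D × C)ᵒᵖ (D × C)ᵒᵖ (Type u)).obj (S (D := D) e).op) :=
  Adjunction.mkOfHomEquiv
    { homEquiv := homEquiv' e
      homEquiv_naturality_left_symm := by intros; rfl
      homEquiv_naturality_right := by intros; rfl }

end ExpPYAux

/-- Let `D` and `C` be small categories with `C` having binary products,
let `e` be an object of `C`, and let `X` be a presheaf on `D × C`. Then the exponential
presheaf `X^(π*(y e))` in `Psh(D × C)` satisfies `X^(π*(y e))(c, d) ≅ X(c, d × e)` for all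
objects `c` of `D` and `d` of `C`, naturally in `(c, d)`; i.e. the exponential presheaf is
naturally isomorphic to the presheaf `(c, d) ↦ X(c, d × e)`. -/
theorem exponential_by_precomposed_yoneda
    (D C : Type u) [SmallCategory D] [SmallCategory C] [HasBinaryProducts C]
    (e : C) (X : (D × C)ᵒᵖ ⥤ Type u) :
    Nonempty
      ((ihom (((Functor.whiskeringLeft (D × C)ᵒᵖ Cᵒᵖ (Type u)).obj
          (CategoryTheory.Prod.snd D C).op).obj (yoneda.obj e))).obj X ≅
        ((𝟭 D).prod (Limits.prod.functor.flip.obj e)).op ⋙ X) :=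
  ⟨((ihom.adjunction _).rightAdjointUniq (ExpPYAux.adj e)).app X⟩
end

section
/- Let C be a small category and let ω denote the poset (ℕ, ≤) regarded as a category. Let X be a presheaf on C × ω. Suppose given, for every object I of C, an element a_{I,0} ∈ X(I,0) and, for every n, a function a_{I,n+1} : X(I,n) → X(I,n+1), such that: (i) the families a_{I,n} are natural in I, i.e. for every morphism f : J → I in C, X(f, id)(a_{I,0}) = a_{J,0} and X(f, id) ∘ a_{I,n+1} = a_{J,n+1} ∘ X(f, id); (ii) for all I and all x ∈ X(I,0), the restriction of a_{I,1}(x) along 0 ≤ 1 equals a_{I,0}; and (iii) for all I and n, restricting along n+1 ≤ n+2 satisfies X(id, n+1 ≤ n+2) ∘ a_{I,n+2} = a_{I,n+1} ∘ X(id, n ≤ n+1). Then there exists a unique global element β of X (i.e. a family β_{I,n} ∈ X(I,n) natural in I and compatible with the ω-restrictions) such that β_{I,0} = a_{I,0} and β_{I,n+1} = a_{I,n+1}(β_{I,n}) for all I and n. -/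
open CategoryTheory CategoryTheory.Limits Opposite

universe u

/-- Let `C` be a small category and `ω = (ℕ, ≤)`. Let `X` be a presheaf on
`C × ω`. Given a family `a_{I,0} ∈ X(I,0)` and functions `a_{I,n+1} : X(I,n) → X(I,n+1)`,
natural in `I` and compatible with the `ω`-restrictions as in (i)–(iii), there exists a
unique global element `β` of `X` such that `β_{I,0} = a_{I,0}` and
`β_{I,n+1} = a_{I,n+1}(β_{I,n})` for all `I` and `n`. -/
theorem guarded_fixed_point_of_later_algebra
    (C : Type u) [SmallCategory C] (X : (C × ℕ)ᵒᵖ ⥤ Type u)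
    (a0 : ∀ I : C, X.obj (op (I, 0)))
    (aS : ∀ (I : C) (n : ℕ), X.obj (op (I, n)) → X.obj (op (I, n + 1)))
    -- (i) naturality in `I`:
    (hnat0 : ∀ {J I : C} (f : J ⟶ I),
      X.map (Quiver.Hom.op ((f, 𝟙 (0 : ℕ)) : ((J, 0) : C × ℕ) ⟶ ((I, 0) : C × ℕ)))
        (a0 I) = a0 J)
    (hnatS : ∀ {J I : C} (f : J ⟶ I) (n : ℕ) (x : X.obj (op (I, n))),
      X.map (Quiver.Hom.op ((f, 𝟙 (n + 1 : ℕ)) :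
          ((J, n + 1) : C × ℕ) ⟶ ((I, n + 1) : C × ℕ))) (aS I n x) =
        aS J n (X.map (Quiver.Hom.op ((f, 𝟙 (n : ℕ)) :
          ((J, n) : C × ℕ) ⟶ ((I, n) : C × ℕ))) x))
    -- (ii) restricting `a_{I,1}(x)` along `0 ≤ 1` gives `a_{I,0}`:
    (h01 : ∀ (I : C) (x : X.obj (op (I, 0))),
      X.map (Quiver.Hom.op ((𝟙 I, homOfLE (Nat.le_succ 0)) :
          ((I, 0) : C × ℕ) ⟶ ((I, 1) : C × ℕ))) (aS I 0 x) = a0 I)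
    -- (iii) compatibility with restriction along `n+1 ≤ n+2`:
    (hSS : ∀ (I : C) (n : ℕ) (x : X.obj (op (I, n + 1))),
      X.map (Quiver.Hom.op ((𝟙 I, homOfLE (Nat.le_succ (n + 1))) :
          ((I, n + 1) : C × ℕ) ⟶ ((I, n + 2) : C × ℕ))) (aS I (n + 1) x) =
        aS I n (X.map (Quiver.Hom.op ((𝟙 I, homOfLE (Nat.le_succ n)) :
          ((I, n) : C × ℕ) ⟶ ((I, n + 1) : C × ℕ))) x)) :
    ∃! β : ∀ (I : C) (n : ℕ), X.obj (op (I, n)),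
      (∀ {J I : C} (f : J ⟶ I) {m n : ℕ} (h : m ≤ n),
        X.map (Quiver.Hom.op ((f, homOfLE h) :
          ((J, m) : C × ℕ) ⟶ ((I, n) : C × ℕ))) (β I n) = β J m) ∧
      (∀ I : C, β I 0 = a0 I) ∧
      (∀ (I : C) (n : ℕ), β I (n + 1) = aS I n (β I n)) := by
  -- define β by recursion
  let β : ∀ (I : C) (n : ℕ), X.obj (op (I, n)) := fun I n =>
    Nat.rec (a0 I) (fun n x => aS I n x) n
  have hβ0 : ∀ I, β I 0 = a0 I := fun I => rfl
  have hβS : ∀ I n, β I (n + 1) = aS I n (β I n) := fun I n => rfl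
  -- step restriction lemma
  have step : ∀ (I : C) (n : ℕ),
      X.map (Quiver.Hom.op ((𝟙 I, homOfLE (Nat.le_succ n)) :
        ((I, n) : C × ℕ) ⟶ ((I, n + 1) : C × ℕ))) (β I (n + 1)) = β I n := by
    intro I n
    induction n with
    | zero => exact h01 I (a0 I)
    | succ n ih =>
      rw [hβS I (n + 1), hSS I n (β I (n + 1)), ih]
  -- general ω-restriction
  have omegaRes : ∀ (I : C) (m n : ℕ) (h : m ≤ n),
      X.map (Quiver.Hom.op ((𝟙 I, homOfLE h) :
        ((I, m) : C × ℕ) ⟶ ((I, n) : C × ℕ))) (β I n) = β I m := by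
    intro I m n h
    induction n with
    | zero =>
      obtain rfl : m = 0 := Nat.le_zero.mp h
      have : ((𝟙 I, homOfLE h) : ((I, 0) : C × ℕ) ⟶ ((I, 0) : C × ℕ)) =
          𝟙 ((I, 0) : C × ℕ) := rfl
      rw [this, CategoryTheory.op_id, X.map_id]; rfl
    | succ n ih =>
      rcases Nat.lt_or_ge m (n + 1) with hm | hm
      · have hmn : m ≤ n := Nat.lt_succ_iff.mp hm
        have hcomp : ((𝟙 I, homOfLE h) : ((I, m) : C × ℕ) ⟶ ((I, n + 1) : C × ℕ)) =
            (((𝟙 I, homOfLE hmn) : ((I, m) : C × ℕ) ⟶ ((I, n) : C × ℕ)) ≫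
              ((𝟙 I, homOfLE (Nat.le_succ n)) : ((I, n) : C × ℕ) ⟶ ((I, n + 1) : C × ℕ)) :
              ((I, m) : C × ℕ) ⟶ ((I, n + 1) : C × ℕ)) := by
          apply Prod.ext
          · simp
          · rfl
        rw [hcomp, CategoryTheory.op_comp, X.map_comp]
        simp only [types_comp_apply]
        rw [step I n, ih hmn]
      · obtain rfl : m = n + 1 := le_antisymm h hm
        have : ((𝟙 I, homOfLE h) : ((I, n + 1) : C × ℕ) ⟶ ((I, n + 1) : C × ℕ)) =
            𝟙 ((I, n + 1) : C × ℕ) := rfl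
        rw [this, CategoryTheory.op_id, X.map_id]; rfl
  -- naturality in C
  have natC : ∀ {J I : C} (f : J ⟶ I) (n : ℕ),
      X.map (Quiver.Hom.op ((f, 𝟙 (n : ℕ)) :
        ((J, n) : C × ℕ) ⟶ ((I, n) : C × ℕ))) (β I n) = β J n := by
    intro J I f n
    induction n with
    | zero => exact hnat0 f
    | succ n ih =>
      rw [hβS I n, hnatS f n (β I n), ih, hβS J n]
  refine ⟨β, ⟨?_, hβ0, hβS⟩, ?_⟩
  · intro J I f m n h
    have hcomp : ((f, homOfLE h) : ((J, m) : C × ℕ) ⟶ ((I, n) : C × ℕ)) =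
        (((𝟙 J, homOfLE h) : ((J, m) : C × ℕ) ⟶ ((J, n) : C × ℕ)) ≫
          ((f, 𝟙 n) : ((J, n) : C × ℕ) ⟶ ((I, n) : C × ℕ)) :
          ((J, m) : C × ℕ) ⟶ ((I, n) : C × ℕ)) := by
      apply Prod.ext
      · simp
      · rfl
    rw [hcomp, CategoryTheory.op_comp, X.map_comp]
    simp only [types_comp_apply]
    rw [natC f n, omegaRes J m n h]
  · intro γ ⟨hres, hγ0, hγS⟩
    funext I n
    induction n with
    | zero => rw [hγ0 I, hβ0 I]
    | succ n ih => rw [hγS I n, hβS I n, ih]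
end

section
/- Let C be a small category, Γ a presheaf on C, and Γ' a subpresheaf of Γ such that for each object c of C, membership of an element of Γ(c) in Γ'(c) is decidable. Regard the category of elements ∫Γ' as a full subcategory of ∫Γ via the inclusion. Let T be a presheaf on ∫Γ and A a presheaf on ∫Γ', and suppose given a natural isomorphism between A and the restriction of T along the inclusion ∫Γ' ⥤ ∫Γ. Then there exists a presheaf T' on ∫Γ such that (1) the restriction of T' to ∫Γ' is equal (as a functor, on the nose) to A, and (2) there is a natural isomorphism T ≅ T' whose restriction to ∫Γ' is the given isomorphism between the restriction of T and A. -/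
open CategoryTheory CategoryTheory.GrothendieckTopology

universe u

namespace StrictAux

variable {C : Type u} [SmallCategory C] {Γ : Cᵒᵖ ⥤ Type u} (Γ' : Subfunctor Γ)
variable (hdec : ∀ (c : Cᵒᵖ) (x : Γ.obj c), Decidable (x ∈ Γ'.obj c))
variable (T : (Γ.Elements)ᵒᵖ ⥤ Type u) (A : (Γ'.toFunctor.Elements)ᵒᵖ ⥤ Type u)
variable (iso : A ≅ (CategoryOfElements.map Γ'.ι).op ⋙ T)

def lift (x : Γ.Elements) (h : x.2 ∈ Γ'.obj x.1) : Γ'.toFunctor.Elements :=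
  ⟨x.1, ⟨x.2, h⟩⟩

def objFam (x : (Γ.Elements)ᵒᵖ) : Type u :=
  @dite _ (x.unop.2 ∈ Γ'.obj x.unop.1) (hdec _ _)
    (fun h => A.obj (Opposite.op (lift Γ' x.unop h))) (fun _ => T.obj x)

def ε (x : (Γ.Elements)ᵒᵖ) : T.obj x ≅ objFam Γ' hdec T A x :=
  @dite _ (x.unop.2 ∈ Γ'.obj x.unop.1) (hdec _ _)
    (fun h => (iso.app (Opposite.op (lift Γ' x.unop h))).symm ≪≫
        eqToIso ((by exact dif_pos h : objFam Γ' hdec T A x = _)).symm)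
    (fun h => eqToIso ((by exact dif_neg h : objFam Γ' hdec T A x = _)).symm)

def T' : (Γ.Elements)ᵒᵖ ⥤ Type u where
  obj := objFam Γ' hdec T A
  map {X Y} f := (ε Γ' hdec T A iso X).inv ≫ T.map f ≫ (ε Γ' hdec T A iso Y).hom
  map_id X := by simp
  map_comp f g := by simp

lemma ε_pos (x : (Γ.Elements)ᵒᵖ) (h : x.unop.2 ∈ Γ'.obj x.unop.1) :
    ε Γ' hdec T A iso x = (iso.app (Opposite.op (lift Γ' x.unop h))).symm ≪≫
        eqToIso ((by exact dif_pos h : objFam Γ' hdec T A x = _)).symm := by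
  unfold ε
  rw [dif_pos h]
  rfl

lemma restrict_eq :
    (CategoryOfElements.map Γ'.ι).op ⋙ T' Γ' hdec T A iso = A := by
  apply CategoryTheory.Functor.ext
  case h_obj =>
    intro X
    exact dif_pos X.unop.2.2
  case h_map =>
    intro X Y f
    show (ε Γ' hdec T A iso _).inv ≫ T.map _ ≫ (ε Γ' hdec T A iso _).hom = _
    rw [ε_pos Γ' hdec T A iso _ X.unop.2.2, ε_pos Γ' hdec T A iso _ Y.unop.2.2]
    simp only [Iso.trans_inv, Iso.trans_hom, Iso.symm_inv, Iso.symm_hom, eqToIso.inv, eqToIso.hom, Category.assoc]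
    have e1 : (iso.app (Opposite.op (lift Γ' (Opposite.unop ((CategoryOfElements.map Γ'.ι).op.obj X)) X.unop.2.2))).hom
        = iso.hom.app X := rfl
    have e2 : (iso.app (Opposite.op (lift Γ' (Opposite.unop ((CategoryOfElements.map Γ'.ι).op.obj Y)) Y.unop.2.2))).inv
        = iso.inv.app Y := rfl
    rw [e1, e2]
    have nat : iso.hom.app X ≫ T.map ((CategoryOfElements.map Γ'.ι).op.map f) ≫ iso.inv.app Y = A.map f := by
      have h := iso.hom.naturality f
      simp only [Functor.comp_map, Functor.op_map] at h ⊢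
      rw [← Category.assoc, ← h, Category.assoc, Iso.hom_inv_id_app, Category.comp_id]
    erw [Category.assoc, reassoc_of% nat]
    rfl

def e : T ≅ T' Γ' hdec T A iso :=
  NatIso.ofComponents (ε Γ' hdec T A iso) (by
    intro X Y f
    show T.map f ≫ _ = (ε Γ' hdec T A iso X).hom ≫
      ((ε Γ' hdec T A iso X).inv ≫ T.map f ≫ (ε Γ' hdec T A iso Y).hom)
    simp)

end StrictAux

open StrictAux in
/-- **Strictification.** Let `C` be a small category, `Γ` a presheaf on `C`,
and `Γ'` a subpresheaf of `Γ` with decidable membership. Regard the category of elements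
`∫Γ'` as a full subcategory of `∫Γ` via the inclusion functor induced by `Γ'.ι`. Let `T` be
a presheaf on `∫Γ` and `A` a presheaf on `∫Γ'`, together with a natural isomorphism between
`A` and the restriction of `T` along the inclusion. Then there exists a presheaf `T'` on
`∫Γ` whose restriction to `∫Γ'` is equal (on the nose) to `A`, together with a natural
isomorphism `T ≅ T'` whose restriction to `∫Γ'` is the given isomorphism. -/
theorem strictification_of_presheaf_along_subpresheaf
    (C : Type u) [SmallCategory C] (Γ : Cᵒᵖ ⥤ Type u) (Γ' : Subfunctor Γ)
    (hdec : ∀ (c : Cᵒᵖ) (x : Γ.obj c), Decidable (x ∈ Γ'.obj c))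
    (T : (Γ.Elements)ᵒᵖ ⥤ Type u)
    (A : (Γ'.toFunctor.Elements)ᵒᵖ ⥤ Type u)
    (iso : A ≅ (CategoryOfElements.map Γ'.ι).op ⋙ T) :
    ∃ (T' : (Γ.Elements)ᵒᵖ ⥤ Type u)
      (h : (CategoryOfElements.map Γ'.ι).op ⋙ T' = A)
      (e : T ≅ T'),
        Functor.whiskerLeft (CategoryOfElements.map Γ'.ι).op e.hom ≫ eqToHom h = iso.inv := by
  refine ⟨T' Γ' hdec T A iso, restrict_eq Γ' hdec T A iso, e Γ' hdec T A iso, ?_⟩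
  apply NatTrans.ext
  funext X
  show (ε Γ' hdec T A iso ((CategoryOfElements.map Γ'.ι).op.obj X)).hom ≫ _ = iso.inv.app X
  rw [ε_pos Γ' hdec T A iso _ X.unop.2.2]
  simp only [Iso.trans_hom, Iso.symm_hom, eqToIso.hom, Category.assoc, eqToHom_app, eqToHom_trans]
  have e1 : (iso.app (Opposite.op (lift Γ' (Opposite.unop ((CategoryOfElements.map Γ'.ι).op.obj X)) X.unop.2.2))).inv
      = iso.inv.app X := rfl
  rw [e1]
  erw [Category.assoc, eqToHom_trans, eqToHom_refl, Category.comp_id]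
end
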